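/- Let ℓ be a prime and n ≥ 1, and set N = ℓⁿ. Then S(N) = (ℓ^m − 1)² if n = 2m + 1, and S(N) = (ℓ^m − 1)·(ℓ^{m+1} − 1) if n = 2m + 2. -/

import Mathlib

/-- `μ(k)`: the least positive integer `m` such that `gcd(m·k − 1, N) = 1`. -/
noncomputable def mu (N k : ℤ) : ℕ :=
  sInf {m : ℕ | 0 < m ∧ Int.gcd ((m : ℤ) * k - 1) N = 1}

/-- `S(N) = Σ μ(k)·(1 − gcd(k,N)²/N)`, the sum over all `k` with `1 < k < N`,
`gcd(k, N) > 1` and `gcd(k, N)² < N`. -/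
noncomputable def weberS (N : ℤ) : ℚ :=
  ∑ k ∈ Finset.Ico (2 : ℤ) N,
    if 1 < Int.gcd k N ∧ ((Int.gcd k N : ℤ)) ^ 2 < N then
      (mu N k : ℚ) * (1 - (Int.gcd k N : ℚ) ^ 2 / (N : ℚ))
    else 0

noncomputable def Fq (ℓ n : ℕ) (d : ℕ) : ℚ :=
  if 1 < d ∧ ((d:ℤ))^2 < (ℓ:ℤ)^n then 1 - (d:ℚ)^2 / (ℓ:ℚ)^n else 0

noncomputable def Tq (ℓ n a v : ℕ) : ℚ :=
  ∑ j ∈ Finset.Ico (1:ℤ) ((ℓ:ℤ)^a), Fq ℓ n (ℓ^v * Int.gcd j ((ℓ:ℤ)^a))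

lemma gcd_pow_eq_one (ℓ : ℕ) (hℓ : ℓ.Prime) (n : ℕ) (x : ℤ) (h : ¬ (ℓ:ℤ) ∣ x) :
    Int.gcd x ((ℓ:ℤ)^n) = 1 := by
  rw [← Int.isCoprime_iff_gcd_eq_one]
  have hp : Prime (ℓ : ℤ) := Nat.prime_iff_prime_int.mp hℓ
  exact ((hp.coprime_iff_not_dvd).mpr h).symm.pow_right

lemma mu_eq_one (ℓ : ℕ) (hℓ : ℓ.Prime) (n : ℕ) (k : ℤ) (h : (ℓ:ℤ) ∣ k) :
    mu ((ℓ:ℤ)^n) k = 1 := by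
  have h1 : (1:ℕ) ∈ {m : ℕ | 0 < m ∧ Int.gcd ((m : ℤ) * k - 1) ((ℓ:ℤ)^n) = 1} := by
    refine ⟨one_pos, ?_⟩
    push_cast
    rw [one_mul]
    apply gcd_pow_eq_one ℓ hℓ
    intro hd
    have h2 : (ℓ:ℤ) ∣ 1 := by
      have := dvd_sub h hd
      simpa using this
    have := Int.le_of_dvd one_pos h2
    have := hℓ.two_le
    omega
  have h2 := Nat.sInf_le h1
  have h3 := Nat.sInf_mem ⟨1, h1⟩
  have h4 := h3.1
  unfold mu
  omega

lemma Tq_succ (ℓ n : ℕ) (hℓ : ℓ.Prime) (a v : ℕ) :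
    Tq ℓ n (a+1) v = ((ℓ:ℚ)^(a+1) - (ℓ:ℚ)^a) * Fq ℓ n (ℓ^v) + Tq ℓ n a (v+1) := by
  classical
  have hl2 := hℓ.two_le
  have hlz : (0:ℤ) < (ℓ:ℤ) := by exact_mod_cast hℓ.pos
  unfold Tq
  rw [← Finset.sum_filter_add_sum_filter_not (Finset.Ico (1:ℤ) ((ℓ:ℤ)^(a+1)))
      (fun j => (ℓ:ℤ) ∣ j)]
  have himg : Finset.filter (fun j => (ℓ:ℤ) ∣ j) (Finset.Ico (1:ℤ) ((ℓ:ℤ)^(a+1)))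
      = Finset.image (fun j => (ℓ:ℤ)*j) (Finset.Ico (1:ℤ) ((ℓ:ℤ)^a)) := by
    ext x
    simp only [Finset.mem_filter, Finset.mem_Ico, Finset.mem_image]
    constructor
    · rintro ⟨⟨h1, h2⟩, j, rfl⟩
      refine ⟨j, ⟨?_, ?_⟩, rfl⟩
      · nlinarith
      · have : (ℓ:ℤ)^(a+1) = (ℓ:ℤ) * (ℓ:ℤ)^a := by ring
        rw [this] at h2
        exact lt_of_mul_lt_mul_left h2 (le_of_lt hlz)
    · rintro ⟨j, ⟨h1, h2⟩, rfl⟩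
      refine ⟨⟨?_, ?_⟩, ⟨j, rfl⟩⟩
      · nlinarith
      · have : (ℓ:ℤ)^(a+1) = (ℓ:ℤ) * (ℓ:ℤ)^a := by ring
        rw [this]
        exact mul_lt_mul_of_pos_left h2 hlz
  rw [himg, Finset.sum_image (by
    intro x _ y _ hxy
    exact mul_left_cancel₀ (ne_of_gt hlz) hxy)]
  have hterm : ∀ j ∈ Finset.Ico (1:ℤ) ((ℓ:ℤ)^a),
      Fq ℓ n (ℓ^v * Int.gcd ((ℓ:ℤ)*j) ((ℓ:ℤ)^(a+1)))
        = Fq ℓ n (ℓ^(v+1) * Int.gcd j ((ℓ:ℤ)^a)) := by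
    intro j _
    have : (ℓ:ℤ)^(a+1) = (ℓ:ℤ) * (ℓ:ℤ)^a := by ring
    rw [this, Int.gcd_mul_left, Int.natAbs_natCast]
    ring_nf
  rw [Finset.sum_congr rfl hterm]
  have hterm2 : ∀ j ∈ Finset.filter (fun j => ¬ (ℓ:ℤ) ∣ j) (Finset.Ico (1:ℤ) ((ℓ:ℤ)^(a+1))),
      Fq ℓ n (ℓ^v * Int.gcd j ((ℓ:ℤ)^(a+1))) = Fq ℓ n (ℓ^v) := by
    intro j hj
    rw [Finset.mem_filter] at hj
    rw [gcd_pow_eq_one ℓ hℓ _ j hj.2, mul_one]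
  rw [Finset.sum_congr rfl hterm2, Finset.sum_const, nsmul_eq_mul]
  have hcard : ((Finset.filter (fun j => ¬ (ℓ:ℤ) ∣ j) (Finset.Ico (1:ℤ) ((ℓ:ℤ)^(a+1)))).card : ℚ)
      = (ℓ:ℚ)^(a+1) - (ℓ:ℚ)^a := by
    have hsum := Finset.card_filter_add_card_filter_not (s := Finset.Ico (1:ℤ) ((ℓ:ℤ)^(a+1)))
      (fun j => (ℓ:ℤ) ∣ j)
    have hc1 : (Finset.filter (fun j => (ℓ:ℤ) ∣ j) (Finset.Ico (1:ℤ) ((ℓ:ℤ)^(a+1)))).card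
        = ((ℓ:ℤ)^a - 1).toNat := by
      rw [himg, Finset.card_image_of_injective _ (mul_right_injective₀ (ne_of_gt hlz)),
        Int.card_Ico]
    have hc2 : (Finset.Ico (1:ℤ) ((ℓ:ℤ)^(a+1))).card = ((ℓ:ℤ)^(a+1) - 1).toNat := Int.card_Ico _ _
    rw [hc1, hc2] at hsum
    have e1 : (1:ℤ) ≤ (ℓ:ℤ)^a := one_le_pow₀ (by omega)
    have e2 : (1:ℤ) ≤ (ℓ:ℤ)^(a+1) := one_le_pow₀ (by omega)
    have q1 : (((ℓ:ℤ)^a - 1).toNat : ℚ) = (ℓ:ℚ)^a - 1 := by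
      have := Int.toNat_of_nonneg (by omega : (0:ℤ) ≤ (ℓ:ℤ)^a - 1)
      have := congrArg (Int.cast : ℤ → ℚ) this
      push_cast at this ⊢
      linarith
    have q2 : (((ℓ:ℤ)^(a+1) - 1).toNat : ℚ) = (ℓ:ℚ)^(a+1) - 1 := by
      have := Int.toNat_of_nonneg (by omega : (0:ℤ) ≤ (ℓ:ℤ)^(a+1) - 1)
      have := congrArg (Int.cast : ℤ → ℚ) this
      push_cast at this ⊢
      linarith
    have := congrArg (Nat.cast : ℕ → ℚ) hsum
    push_cast at this
    rw [q1, q2] at *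
    linarith
  rw [hcard]
  ring

lemma Tq_zero (ℓ n : ℕ) (hℓ : ℓ.Prime) (a v : ℕ) (h : n ≤ 2*v) : Tq ℓ n a v = 0 := by
  unfold Tq
  apply Finset.sum_eq_zero
  intro j hj
  rw [Finset.mem_Ico] at hj
  set g := Int.gcd j ((ℓ:ℤ)^a) with hg
  have hg1 : 1 ≤ g := by
    rcases Nat.eq_zero_or_pos g with h0 | h0
    · exfalso
      have := Int.gcd_eq_zero_iff.mp (hg ▸ h0)
      omega
    · omega
  have key : (ℓ:ℤ)^n ≤ ((ℓ^v * g : ℕ) : ℤ)^2 := by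
    have h1 : ℓ^n ≤ (ℓ^v * g)^2 := by
      calc ℓ^n ≤ ℓ^(2*v) := Nat.pow_le_pow_right hℓ.one_le h
        _ = (ℓ^v)^2 := by rw [← pow_mul]; ring_nf
        _ ≤ (ℓ^v * g)^2 := Nat.pow_le_pow_left (Nat.le_mul_of_pos_right _ hg1) 2
    exact_mod_cast h1
  unfold Fq
  rw [if_neg]
  rintro ⟨-, h2⟩
  omega

lemma alg_id (x X Y : ℚ) (hx : x ≠ 0) (w b : ℕ) :
    (x^(b+1) - x^b) * (1 - (x^(w+1))^2/x^(w+b+2)) + (x^b - X - Y + x^(w+1))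
      = x^(b+1) - X - Y + x^w := by
  field_simp
  ring

lemma Tq_form (ℓ n : ℕ) (hℓ : ℓ.Prime) (hn : 1 ≤ n) :
    ∀ d v : ℕ, 1 ≤ v → v + d = (n-1)/2 + 1 →
      Tq ℓ n (n - v) v
        = (ℓ:ℚ)^(n-v) - (ℓ:ℚ)^(n-1-(n-1)/2) - (ℓ:ℚ)^((n-1)/2) + (ℓ:ℚ)^(v-1) := by
  have hl2 := hℓ.two_le
  have hlq : (ℓ:ℚ) ≠ 0 := by
    have : (0:ℚ) < (ℓ:ℚ) := by exact_mod_cast hℓ.pos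
    exact ne_of_gt this
  intro d
  induction d with
  | zero =>
    intro v hv1 hv2
    rw [Tq_zero ℓ n hℓ _ v (by omega)]
    have e1 : n - v = n - 1 - (n-1)/2 := by omega
    have e2 : v - 1 = (n-1)/2 := by omega
    rw [e1, e2]; ring
  | succ d ih =>
    intro v hv1 hv2
    have h2v : 2*v < n := by omega
    set X := (ℓ:ℚ)^(n-1-(n-1)/2) with hX
    set Y := (ℓ:ℚ)^((n-1)/2) with hY
    obtain ⟨w, rfl⟩ : ∃ w, v = w + 1 := ⟨v-1, by omega⟩
    obtain ⟨b, hnb⟩ : ∃ b, n = w + b + 2 := ⟨n - w - 2, by omega⟩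
    have ha : n - (w+1) = b + 1 := by omega
    rw [ha, Tq_succ ℓ n hℓ b (w+1)]
    have ihv := ih (w+2) (by omega) (by omega)
    rw [show n - (w+2) = b from by omega] at ihv
    rw [show w+1+1 = w+2 from rfl, ihv]
    have hF : Fq ℓ n (ℓ^(w+1)) = 1 - ((ℓ:ℚ)^(w+1))^2 / (ℓ:ℚ)^n := by
      unfold Fq
      rw [if_pos]
      · push_cast
        ring_nf
      · constructor
        · exact Nat.one_lt_pow (by omega) hℓ.one_lt
        · have hlt : ℓ^(2*(w+1)) < ℓ^n := Nat.pow_lt_pow_right hℓ.one_lt (by omega)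
          calc ((ℓ^(w+1):ℕ):ℤ)^2 = ((ℓ^(2*(w+1)) : ℕ) : ℤ) := by push_cast; ring
            _ < (ℓ:ℤ)^n := by exact_mod_cast hlt
    rw [hF, show (ℓ:ℚ)^n = (ℓ:ℚ)^(w+b+2) from by rw [← hnb],
      show w+2-1 = w+1 from rfl, show w+1-1 = w from rfl]
    exact alg_id (ℓ:ℚ) X Y hlq w b

lemma weberS_eq (ℓ n : ℕ) (hℓ : ℓ.Prime) (hn : 1 ≤ n) :
    weberS ((ℓ:ℤ)^n) = Tq ℓ n n 0 := by
  classical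
  have hl2 := hℓ.two_le
  have hN2 : (2:ℤ) ≤ (ℓ:ℤ)^n := by
    have h1 : (ℓ:ℤ) ≤ (ℓ:ℤ)^n := le_self_pow₀ (by exact_mod_cast hℓ.one_le) (by omega)
    have h2 : (2:ℤ) ≤ (ℓ:ℤ) := by exact_mod_cast hl2
    linarith
  unfold weberS Tq
  have hins : Finset.Ico (1:ℤ) ((ℓ:ℤ)^n) = insert 1 (Finset.Ico (2:ℤ) ((ℓ:ℤ)^n)) := by
    ext x
    simp only [Finset.mem_Ico, Finset.mem_insert]
    omega
  rw [hins, Finset.sum_insert (by simp)]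
  have h1 : Fq ℓ n (ℓ^0 * Int.gcd 1 ((ℓ:ℤ)^n)) = 0 := by
    simp [Fq, Int.gcd]
  rw [h1, zero_add]
  apply Finset.sum_congr rfl
  intro k hk
  rw [Finset.mem_Ico] at hk
  unfold Fq
  rw [pow_zero, one_mul]
  by_cases hc : 1 < Int.gcd k ((ℓ:ℤ)^n) ∧ ((Int.gcd k ((ℓ:ℤ)^n) : ℤ))^2 < (ℓ:ℤ)^n
  · rw [if_pos hc, if_pos hc]
    have hdvd : (ℓ:ℤ) ∣ k := by
      have hg : (Int.gcd k ((ℓ:ℤ)^n) : ℤ) ∣ ((ℓ^n : ℕ) : ℤ) := by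
        push_cast
        exact Int.gcd_dvd_right _ _
      have hgn : Int.gcd k ((ℓ:ℤ)^n) ∣ ℓ^n := Int.natCast_dvd_natCast.mp hg
      obtain ⟨i, hi, hgei⟩ := (Nat.dvd_prime_pow hℓ).mp hgn
      have hc1 := hc.1
      have hi1 : i ≠ 0 := by
        rintro rfl
        rw [pow_zero] at hgei
        omega
      have hldg : ℓ ∣ Int.gcd k ((ℓ:ℤ)^n) := hgei ▸ dvd_pow_self ℓ hi1
      exact dvd_trans (Int.natCast_dvd_natCast.mpr hldg) (Int.gcd_dvd_left _ _)
    rw [mu_eq_one ℓ hℓ n k hdvd]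
    push_cast
    ring
  · rw [if_neg hc, if_neg hc]

theorem weberS_prime_pow (ℓ : ℕ) (hℓ : ℓ.Prime) (n : ℕ) (hn : 1 ≤ n) :
    (∀ m : ℕ, n = 2 * m + 1 →
      weberS ((ℓ : ℤ) ^ n) = ((ℓ : ℚ) ^ m - 1) ^ 2) ∧
    (∀ m : ℕ, n = 2 * m + 2 →
      weberS ((ℓ : ℤ) ^ n) = ((ℓ : ℚ) ^ m - 1) * ((ℓ : ℚ) ^ (m + 1) - 1)) := by
  have key : weberS ((ℓ:ℤ)^n)
      = (ℓ:ℚ)^(n-1) - (ℓ:ℚ)^(n-1-(n-1)/2) - (ℓ:ℚ)^((n-1)/2) + 1 := by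
    obtain ⟨p, rfl⟩ : ∃ p, n = p + 1 := ⟨n-1, by omega⟩
    rw [weberS_eq ℓ (p+1) hℓ hn, Tq_succ ℓ (p+1) hℓ p 0]
    have hF0 : Fq ℓ (p+1) (ℓ^0) = 0 := by simp [Fq]
    rw [hF0, mul_zero, zero_add]
    have hform := Tq_form ℓ (p+1) hℓ hn ((p+1-1)/2) 1 (by omega) (by omega)
    simpa using hform

  constructor
  · rintro m rfl
    rw [key]
    rw [show 2*m+1-1 = 2*m from by omega]
    rw [show 2*m/2 = m from by omega]
    rw [show 2*m - m = m from by omega]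
    rw [show 2*m = m + m from by omega, pow_add]
    ring
  · rintro m rfl
    rw [key]
    rw [show 2*m+2-1 = 2*m+1 from by omega]
    rw [show (2*m+1)/2 = m from by omega]
    rw [show 2*m+1 - m = m+1 from by omega]
    rw [show 2*m+1 = m + (m+1) from by omega, pow_add]
    ring
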